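/- (Lomnicki–Ulam expansion) For every x ∈ [0,1] with binary expansion x = Σ_{k≥1} ε_k 2^{-k} (ε_k ∈ {0,1}), one has L_a(x) = (a/(1-a)) · Σ_{n≥1} ε_n · a^{n - I_n} · (1-a)^{I_n}, where I_n = ε_1 + ⋯ + ε_n. -/

import Mathlib

open Topology Filter Set

/-- The de Rham functional equation characterizing Lebesgue's singular function `L_a`
on `[0,1]`, together with continuity. -/
def deRham (a : ℝ) (L : ℝ → ℝ) : Prop :=
  ContinuousOn L (Set.Icc 0 1) ∧
  (∀ x ∈ Set.Icc (0:ℝ) (1/2), L x = a * L (2*x)) ∧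
  (∀ x ∈ Set.Icc (1/2:ℝ) 1, L x = (1-a) * L (2*x - 1) + a)

theorem lomnicki_ulam_expansion (a : ℝ) (ha0 : 0 < a) (ha1 : a < 1)
    (ha : a ≠ 1/2) (L : ℝ → ℝ) (hL : deRham a L)
    (ε : ℕ → ℕ) (hε : ∀ n, ε n ≤ 1)
    (x : ℝ) (hx : x = ∑' n : ℕ, (ε (n+1) : ℝ) / 2 ^ (n+1))
    (I : ℕ → ℕ) (hI : ∀ n, I n = ∑ k ∈ Finset.range n, ε (k+1)) :
    L x = a / (1-a) *
      ∑' n : ℕ, (ε (n+1) : ℝ) * a ^ (n + 1 - I (n+1)) * (1-a) ^ (I (n+1)) := by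
  obtain ⟨hcont, h0, h1⟩ := hL
  have ha1' : (0:ℝ) < 1 - a := by linarith
  -- the shifted tails of the binary expansion
  set y : ℕ → ℝ := fun n => ∑' k : ℕ, (ε (n+k+1) : ℝ) / 2 ^ (k+1) with hy
  have hhalf : Summable (fun k : ℕ => (1/2:ℝ) ^ (k+1)) := by
    have := (summable_geometric_of_lt_one (by norm_num : (0:ℝ) ≤ 1/2)
      (by norm_num : (1/2:ℝ) < 1)).mul_left (1/2)
    simpa [pow_succ, mul_comm] using this
  have hhalf_sum : (∑' k : ℕ, (1/2:ℝ) ^ (k+1)) = 1 := by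
    have h2 : (∑' k : ℕ, (1/2:ℝ) ^ k) = 2 := by
      rw [tsum_geometric_of_lt_one (by norm_num) (by norm_num)]; norm_num
    have := Summable.tsum_eq_zero_add (summable_geometric_of_lt_one
      (by norm_num : (0:ℝ) ≤ 1/2) (by norm_num : (1/2:ℝ) < 1))
    rw [h2] at this
    simp only [pow_zero] at this
    linarith
  have hterm_le : ∀ n k : ℕ, (ε (n+k+1) : ℝ) / 2 ^ (k+1) ≤ (1/2:ℝ) ^ (k+1) := by
    intro n k
    rw [one_div, inv_pow, div_eq_mul_inv]
    have : (ε (n+k+1) : ℝ) ≤ 1 := by exact_mod_cast hε (n+k+1)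
    nlinarith [inv_pos.mpr (pow_pos (by norm_num : (0:ℝ) < 2) (k+1))]
  have hterm_nonneg : ∀ n k : ℕ, 0 ≤ (ε (n+k+1) : ℝ) / 2 ^ (k+1) := by
    intro n k; positivity
  have hsum : ∀ n, Summable (fun k : ℕ => (ε (n+k+1) : ℝ) / 2 ^ (k+1)) := fun n =>
    Summable.of_nonneg_of_le (hterm_nonneg n) (hterm_le n) hhalf
  have hy0 : x = y 0 := by
    rw [hx, hy]; simp
  have hy_nonneg : ∀ n, 0 ≤ y n := fun n => tsum_nonneg (hterm_nonneg n)
  have hy_le_one : ∀ n, y n ≤ 1 := by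
    intro n
    calc y n ≤ ∑' k : ℕ, (1/2:ℝ) ^ (k+1) :=
          Summable.tsum_le_tsum (hterm_le n) (hsum n) hhalf
      _ = 1 := hhalf_sum
  -- recursion for y
  have hrec : ∀ n, y n = (ε (n+1) : ℝ) / 2 + y (n+1) / 2 := by
    intro n
    have h1' := Summable.tsum_eq_zero_add (hsum n)
    have h2' : (∑' k : ℕ, (ε (n+(k+1)+1) : ℝ) / 2 ^ (k+1+1)) = y (n+1) / 2 := by
      rw [show (y (n+1) : ℝ) = ∑' k : ℕ, (ε ((n+1)+k+1) : ℝ) / 2 ^ (k+1) from rfl,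
        ← tsum_div_const]
      congr 1
      funext k
      rw [show n+(k+1)+1 = (n+1)+k+1 from by omega, div_div, ← pow_succ]
    calc y n = ∑' k : ℕ, (ε (n+k+1) : ℝ) / 2 ^ (k+1) := rfl
      _ = (ε (n+0+1) : ℝ) / 2 ^ (0+1)
            + ∑' k : ℕ, (ε (n+(k+1)+1) : ℝ) / 2 ^ (k+1+1) := h1'
      _ = (ε (n+1) : ℝ) / 2 + y (n+1) / 2 := by rw [h2']; norm_num
  have hstep : ∀ n, y (n+1) = 2 * y n - (ε (n+1) : ℝ) := by
    intro n; have := hrec n; linarith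
  -- the functional-equation step
  have hLstep : ∀ n, L (y n) =
      if ε (n+1) = 1 then (1-a) * L (y (n+1)) + a else a * L (y (n+1)) := by
    intro n
    have hε' := hε (n+1)
    by_cases hc : ε (n+1) = 1
    · simp only [hc, if_true]
      have hcast : (ε (n+1) : ℝ) = 1 := by rw [hc]; norm_num
      have hr := hrec n
      rw [hcast] at hr
      have hlow : (1/2:ℝ) ≤ y n := by
        have := hy_nonneg (n+1); linarith
      have key := h0
      have := h1 (y n) ⟨hlow, hy_le_one n⟩
      rw [show (2 * y n - 1 : ℝ) = y (n+1) from by have := hstep n; rw [hcast] at this; linarith]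
        at this
      exact this
    · have hc0 : ε (n+1) = 0 := by have := hε (n+1); omega
      simp only [hc, if_false]
      have hcast : (ε (n+1) : ℝ) = 0 := by rw [hc0]; norm_num
      have hr := hrec n
      rw [hcast] at hr
      have hhigh : y n ≤ 1/2 := by
        have := hy_le_one (n+1); linarith
      have := h0 (y n) ⟨hy_nonneg n, hhigh⟩
      rw [show (2 * y n : ℝ) = y (n+1) from by have := hstep n; rw [hcast] at this; linarith]
        at this
      exact this
  -- weights
  have hIle : ∀ n, I n ≤ n := by
    intro n; rw [hI]
    calc ∑ k ∈ Finset.range n, ε (k+1) ≤ ∑ k ∈ Finset.range n, 1 :=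
          Finset.sum_le_sum (fun k _ => hε (k+1))
      _ = n := by simp
  have hI0 : I 0 = 0 := by rw [hI]; simp
  have hIsucc : ∀ n, I (n+1) = I n + ε (n+1) := by
    intro n; rw [hI, hI, Finset.sum_range_succ]
  set c : ℕ → ℝ := fun n => a ^ (n - I n) * (1-a) ^ (I n) with hc
  have hc0' : c 0 = 1 := by simp [hc, hI0]
  have hcsucc : ∀ n, c (n+1) = c n * (if ε (n+1) = 1 then (1-a) else a) := by
    intro n
    show a ^ (n+1 - I (n+1)) * (1-a) ^ (I (n+1))
      = a ^ (n - I n) * (1-a) ^ (I n) * (if ε (n+1) = 1 then (1-a) else a)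
    by_cases hcase : ε (n+1) = 1
    · have h1' : I (n+1) = I n + 1 := by rw [hIsucc, hcase]
      have h2' : n + 1 - I (n+1) = n - I n := by have := hIle n; omega
      rw [h2', h1']
      simp only [hcase, if_true, pow_succ]
      ring
    · have hcase0 : ε (n+1) = 0 := by have := hε (n+1); omega
      have h1' : I (n+1) = I n := by simp [hIsucc, hcase0]
      have h2' : n + 1 - I (n+1) = (n - I n) + 1 := by have := hIle n; omega
      rw [h2', h1']
      simp only [hcase, if_false, pow_succ]
      ring
  -- main telescoping identity
  have hmain : ∀ N, L x =
      (∑ k ∈ Finset.range N, a * (ε (k+1) : ℝ) * c k) + c N * L (y N) := by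
    intro N
    induction N with
    | zero => simp [hc0', hy0]
    | succ N ih =>
      rw [ih, Finset.sum_range_succ, hLstep N, hcsucc N]
      by_cases hcase : ε (N+1) = 1
      · simp only [hcase, if_true]; push_cast [hcase]; ring
      · have hcase0 : ε (N+1) = 0 := by have := hε (N+1); omega
        simp only [hcase, if_false]; push_cast [hcase0]; ring
  -- the target series
  set t : ℕ → ℝ := fun n =>
    (ε (n+1) : ℝ) * a ^ (n + 1 - I (n+1)) * (1-a) ^ (I (n+1)) with ht
  set m : ℝ := max a (1-a) with hm
  have hm0 : 0 ≤ m := le_trans ha0.le (le_max_left _ _)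
  have hm1 : m < 1 := by
    rw [hm]; apply max_lt ha1; linarith
  have hcm : ∀ n, c n ≤ m ^ n := by
    intro n
    rw [hc]
    calc a ^ (n - I n) * (1-a) ^ (I n)
        ≤ m ^ (n - I n) * m ^ (I n) := by
          apply mul_le_mul (pow_le_pow_left₀ ha0.le (le_max_left _ _) _)
            (pow_le_pow_left₀ ha1'.le (le_max_right _ _) _)
            (pow_nonneg ha1'.le _) (pow_nonneg hm0 _)
      _ = m ^ n := by rw [← pow_add]; congr 1; have := hIle n; omega
  have hc_nonneg : ∀ n, 0 ≤ c n := fun n =>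
    mul_nonneg (pow_nonneg ha0.le _) (pow_nonneg ha1'.le _)
  have ht_nonneg : ∀ n, 0 ≤ t n := by
    intro n; rw [ht]; positivity
  have htm : ∀ n, t n ≤ m ^ n := by
    intro n
    rw [ht]
    have hε' : (ε (n+1) : ℝ) ≤ 1 := by exact_mod_cast hε (n+1)
    calc (ε (n+1) : ℝ) * a ^ (n + 1 - I (n+1)) * (1-a) ^ (I (n+1))
        ≤ 1 * (m ^ (n + 1 - I (n+1)) * m ^ (I (n+1))) := by
          rw [mul_assoc]
          apply mul_le_mul hε'
            (mul_le_mul (pow_le_pow_left₀ ha0.le (le_max_left _ _) _)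
              (pow_le_pow_left₀ ha1'.le (le_max_right _ _) _)
              (pow_nonneg ha1'.le _) (pow_nonneg hm0 _))
            (by positivity) (by norm_num)
      _ = m ^ (n+1) := by rw [one_mul, ← pow_add]; congr 1; have := hIle (n+1); omega
      _ ≤ m ^ n := pow_le_pow_of_le_one hm0 hm1.le (by omega)
  have htsummable : Summable t :=
    Summable.of_nonneg_of_le ht_nonneg htm (summable_geometric_of_lt_one hm0 hm1)
  -- term identity
  have hterm_eq : ∀ n, a * (ε (n+1) : ℝ) * c n = a / (1-a) * t n := by
    intro n
    show a * (ε (n+1) : ℝ) * (a ^ (n - I n) * (1-a) ^ (I n))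
      = a / (1-a) * ((ε (n+1) : ℝ) * a ^ (n + 1 - I (n+1)) * (1-a) ^ (I (n+1)))
    by_cases hcase : ε (n+1) = 1
    · have h1' : I (n+1) = I n + 1 := by rw [hIsucc, hcase]
      have h2' : n + 1 - I (n+1) = n - I n := by have := hIle n; omega
      rw [h2', h1', hcase, pow_succ]
      push_cast
      field_simp
    · have hcase0 : ε (n+1) = 0 := by have := hε (n+1); omega
      rw [hcase0]
      push_cast
      ring
  -- the remainder tends to zero
  obtain ⟨C, hC⟩ := isCompact_Icc.exists_bound_of_continuousOn hcont
  have hrem : Tendsto (fun N => c N * L (y N)) atTop (𝓝 0) := by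
    have hbound : ∀ N, ‖c N * L (y N)‖ ≤ C * m ^ N := by
      intro N
      rw [norm_mul]
      have h1' : ‖c N‖ ≤ m ^ N := by
        rw [Real.norm_eq_abs, abs_of_nonneg (hc_nonneg N)]; exact hcm N
      have h2' : ‖L (y N)‖ ≤ C := hC _ ⟨hy_nonneg N, hy_le_one N⟩
      calc ‖c N‖ * ‖L (y N)‖ ≤ m ^ N * C :=
            mul_le_mul h1' h2' (norm_nonneg _) (pow_nonneg hm0 _)
        _ = C * m ^ N := by ring
    have hlim : Tendsto (fun N => C * m ^ N) atTop (𝓝 0) := by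
      simpa using (tendsto_pow_atTop_nhds_zero_of_lt_one hm0 hm1).const_mul C
    exact squeeze_zero_norm hbound hlim
  -- partial sums tend to L x
  have hpartial : Tendsto (fun N => ∑ k ∈ Finset.range N, a / (1-a) * t k)
      atTop (𝓝 (L x)) := by
    have heq : ∀ N, (∑ k ∈ Finset.range N, a / (1-a) * t k)
        = L x - c N * L (y N) := by
      intro N
      have := hmain N
      have hsum_eq : ∑ k ∈ Finset.range N, a / (1-a) * t k
          = ∑ k ∈ Finset.range N, a * (ε (k+1) : ℝ) * c k :=
        Finset.sum_congr rfl (fun k _ => (hterm_eq k).symm)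
      rw [hsum_eq]; linarith
    simp only [heq]
    simpa using (tendsto_const_nhds (x := L x)).sub hrem
  have hhs : Tendsto (fun N => ∑ k ∈ Finset.range N, a / (1-a) * t k)
      atTop (𝓝 (a / (1-a) * ∑' n, t n)) := by
    have := (htsummable.hasSum.mul_left (a / (1-a))).tendsto_sum_nat
    simpa using this
  have := tendsto_nhds_unique hpartial hhs
  rw [this]
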